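/- Let F₁, F₂ be as in the N = 2 reduced steady-state system: F₁(a₁,a₂) = (k_0 + k_b a₂)·u(a₁,a₂) − a₁ − 2k_m a₁² + 2k_2 a₂ and F₂(a₁,a₂) = k_m a₁² − k_2 a₂, with u(a₁,a₂) = (1/|Ω|)(M_0 − |Γ|(a₁ + 2a₂)). Then (a₁*, a₂*) with a₁* > 0 satisfies F₁ = F₂ = 0 if and only if a₂* = (k_m/k_2)(a₁*)² and a₁* is a root of P₂(α) = −k_0 M_0 + (|Ω| + k_0|Γ|)α + (k_m/k_2)(2k_0|Γ| − M_0 k_b)α² + k_b|Γ|(k_m/k_2)α³ + 2(k_m/k_2)² k_b|Γ| α⁴. -/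

import Mathlib

theorem stmt_12 (k0 kb km k2 M0 Ω Γ : ℝ)
    (hk0 : 0 < k0) (hkb : 0 < kb) (hkm : 0 < km) (hk2 : 0 < k2)
    (hM0 : 0 < M0) (hΩ : 0 < Ω) (hΓ : 0 < Γ)
    (a1 a2 : ℝ) (ha1 : 0 < a1) :
    ((k0 + kb * a2) * ((1 / Ω) * (M0 - Γ * (a1 + 2 * a2)))
        - a1 - 2 * km * a1 ^ 2 + 2 * k2 * a2 = 0 ∧
      km * a1 ^ 2 - k2 * a2 = 0)
    ↔
    (a2 = km / k2 * a1 ^ 2 ∧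
      -(k0 * M0) + (Ω + k0 * Γ) * a1
        + km / k2 * (2 * k0 * Γ - M0 * kb) * a1 ^ 2
        + kb * Γ * (km / k2) * a1 ^ 3
        + 2 * (km / k2) ^ 2 * kb * Γ * a1 ^ 4 = 0) := by
  have hk2' := hk2.ne'
  have hΩ' := hΩ.ne'
  constructor
  · rintro ⟨h1, h2⟩
    have ha2 : a2 = km / k2 * a1 ^ 2 := by
      field_simp
      linarith
    refine ⟨ha2, ?_⟩
    subst ha2
    field_simp at h1 ⊢
    ring_nf at h1 ⊢
    nlinarith [h1]
  · rintro ⟨ha2, hP⟩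
    subst ha2
    refine ⟨?_, by ring_nf; field_simp; ring⟩
    field_simp at hP ⊢
    ring_nf at hP ⊢
    nlinarith [hP]
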